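/- (Principal Lemma) Let $d \ge 1$, $M \ge 8$, $t_1 \ge 2$, $\{t_j\}$ with $t_{j+1}/t_j \ge 1 + 1/M$, and set $\delta = \frac{1}{2^{11}(M\log M)^{1/d}}$, $\delta_1 = 2^{4d+1}\delta^d$, $h = \lceil 2^{3d} M \log M \rceil$, $l_j = \lfloor \log_2(t_j/(2\delta)) \rfloor$. Let $A_j \subseteq [0,1]^d$ be the union of the open dyadic boxes at scale $2^{-l_j}$ (with side lengths $2^{-l_j}$ or $2^{1-l_j}$) covering $\bigcup_{0 \le a_1,\dots,a_d \le \lceil t_j \rceil} E(j,{\bf a}) \cap [0,1]^d$, where $E(j,{\bf a}) = \prod_k \{x \in [0,1] : |x - a_k/t_j| \le \delta/t_j\}$. If $\mu\left(\bigcap_{j \le i} A_j^c\right) \ne 0$, then $\mu\left(A_{i+h} \cap \bigcap_{j \le i} A_j^c\right) \le \delta_1 \, \mu\left(\bigcap_{j \le i} A_j^c\right)$. -/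

import Mathlib

open MeasureTheory Set

private lemma aux_nat1 : ∀ d : ℕ, 1 ≤ d → 2*d ≤ 2^d := by
  intro d hd
  induction d with
  | zero => omega
  | succ n ih =>
    rcases Nat.eq_or_lt_of_le hd with h|h
    · simp [← h]
    · have h1 : 1 ≤ n := by omega
      have h2 := ih h1
      have h3 : (2:ℕ)^(n+1) = 2 * 2^n := by ring
      omega

private lemma aux_nat2 : ∀ d : ℕ, 1 ≤ d → 3*d + 60 ≤ 8^(d+1) := by
  intro d hd
  induction d with
  | zero => omega
  | succ n ih =>
    rcases Nat.eq_or_lt_of_le hd with h|h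
    · simp [← h]
    · have h1 : 1 ≤ n := by omega
      have h2 := ih h1
      have h8 : (8:ℕ)^(n+2) = 8 * 8^(n+1) := by ring
      omega

private lemma aux_zpow_floor_logb {x : ℝ} (hx : 0 < x) :
    (2:ℝ)^(⌊Real.logb 2 x⌋) ≤ x ∧ x < 2 * (2:ℝ)^(⌊Real.logb 2 x⌋) := by
  have hlogb : (2:ℝ) ^ Real.logb 2 x = x := Real.rpow_logb (by norm_num) (by norm_num) hx
  constructor
  · calc (2:ℝ)^(⌊Real.logb 2 x⌋) = (2:ℝ)^((⌊Real.logb 2 x⌋ : ℝ)) := by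
          rw [Real.rpow_intCast]
    _ ≤ (2:ℝ)^(Real.logb 2 x) :=
          Real.rpow_le_rpow_of_exponent_le (by norm_num) (Int.floor_le _)
    _ = x := hlogb
  · calc x = (2:ℝ)^(Real.logb 2 x) := hlogb.symm
    _ < (2:ℝ)^((⌊Real.logb 2 x⌋ : ℝ) + 1) :=
          Real.rpow_lt_rpow_of_exponent_lt (by norm_num) (Int.lt_floor_add_one _)
    _ = 2 * (2:ℝ)^(⌊Real.logb 2 x⌋) := by
          rw [show ((⌊Real.logb 2 x⌋ : ℝ) + 1) = ((⌊Real.logb 2 x⌋ + 1 : ℤ) : ℝ) by push_cast; ring,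
            Real.rpow_intCast, zpow_add_one₀ (by norm_num)]
          ring

private lemma aux_cell_subset {c : ℝ} (hc : 0 < c) {p B B' : ℤ}
    (hne : (Set.Ioo ((p:ℝ)*c) (((p:ℝ)+1)*c) ∩ Set.Ioo ((B:ℝ)*c) ((B':ℝ)*c)).Nonempty) :
    Set.Ioo ((p:ℝ)*c) (((p:ℝ)+1)*c) ⊆ Set.Ioo ((B:ℝ)*c) ((B':ℝ)*c) := by
  obtain ⟨x, ⟨hx1, hx2⟩, hx3, hx4⟩ := hne
  have hBp : (B:ℝ) < (p:ℝ)+1 := lt_of_mul_lt_mul_right (by linarith) hc.le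
  have hpB' : (p:ℝ) < (B':ℝ) := lt_of_mul_lt_mul_right (by linarith) hc.le
  have hBp' : B ≤ p := by exact_mod_cast Int.lt_add_one_iff.mp (by exact_mod_cast hBp)
  have hpB'' : p + 1 ≤ B' := Int.add_one_le_iff.mpr (by exact_mod_cast hpB')
  have hpB3 : (p:ℝ) + 1 ≤ (B':ℝ) := by exact_mod_cast hpB''
  intro y hy
  obtain ⟨hy1, hy2⟩ := hy
  have hc1 : (B:ℝ)*c ≤ (p:ℝ)*c := by
    apply mul_le_mul_of_nonneg_right _ hc.le; exact_mod_cast hBp'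
  have hc2 : ((p:ℝ)+1)*c ≤ (B':ℝ)*c := mul_le_mul_of_nonneg_right hpB3 hc.le
  exact ⟨lt_of_le_of_lt hc1 hy1, lt_of_lt_of_le hy2 hc2⟩

private lemma aux_boxV {Ps δ' α : ℝ} (hPs : 0 < Ps) (h2 : 2*δ'*Ps ≤ 1)
    {b : ℤ} {ε : ℕ} (hε : ε = 1 ∨ ε = 2)
    (h1 : (b:ℝ)/Ps < α + 2*δ') (h2' : α < ((b:ℝ)+ε)/Ps) :
    Set.Ioo ((b:ℝ)/Ps) (((b:ℝ)+ε)/Ps) ⊆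
      Set.Ioo (((⌊α*Ps⌋ - 1 : ℤ):ℝ)/Ps) (((⌊α*Ps⌋ + 3 : ℤ):ℝ)/Ps) := by
  have hεle : (ε:ℝ) ≤ 2 := by rcases hε with h|h <;> simp [h] <;> norm_num
  have hb2 : b ≤ ⌊α*Ps⌋ + 1 := by
    have hba : (b:ℝ) < α*Ps + 1 := by
      have := (div_lt_iff₀ hPs).mp h1
      nlinarith
    have : (b - 1 : ℤ) ≤ ⌊α*Ps⌋ := Int.le_floor.mpr (by push_cast; linarith)
    omega
  have hb1 : ⌊α*Ps⌋ - 1 ≤ b := by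
    have hab : α*Ps < (b:ℝ) + ε := by
      have := (lt_div_iff₀ hPs).mp h2'
      linarith
    have hf : ⌊α*Ps⌋ < b + 2 := Int.floor_lt.mpr (by push_cast; nlinarith)
    omega
  intro y hy
  obtain ⟨hy1, hy2⟩ := hy
  have hq1 : ((⌊α*Ps⌋ - 1 : ℤ):ℝ) ≤ (b:ℝ) := by exact_mod_cast hb1
  have hq2 : (b:ℝ) + ε ≤ ((⌊α*Ps⌋ + 3 : ℤ):ℝ) := by
    have : (b:ℝ) ≤ ((⌊α*Ps⌋ + 1 : ℤ):ℝ) := by exact_mod_cast hb2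
    push_cast at this ⊢
    linarith
  constructor
  · exact lt_of_le_of_lt (by gcongr) hy1
  · exact lt_of_lt_of_le hy2 (by gcongr)

private lemma aux_hyperplane (d : ℕ) (k : Fin d) (c : ℝ) :
    volume {x : Fin d → ℝ | x k = c} = 0 := by
  have heq : {x : Fin d → ℝ | x k = c}
      = Set.univ.pi (fun j => if j = k then ({c} : Set ℝ) else Set.univ) := by
    ext x
    simp only [Set.mem_setOf_eq, Set.mem_pi, Set.mem_univ, forall_true_left]
    constructor
    · intro h j; by_cases hj : j = k <;> simp [hj, h]
    · intro h; have := h k; simpa using this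
  rw [heq, volume_pi_pi]
  apply Finset.prod_eq_zero (Finset.mem_univ k)
  simp


set_option maxHeartbeats 1600000 in
/-- Principal Lemma (Lemma 1): with `A j` the union of the open dyadic boxes at
scale `2^(-l j)` (side lengths `2^(-l j)` or `2^(1 - l j)`) meeting the union of
the boxes `E(j, a)`, if `μ(⋂_{j ≤ i} A j ᶜ) ≠ 0` then
`μ(A (i+h) ∩ ⋂_{j ≤ i} A j ᶜ) ≤ δ₁ μ(⋂_{j ≤ i} A j ᶜ)`. -/
theorem principal_lemma (d : ℕ) (hd : 1 ≤ d) (M : ℝ) (hM : 8 ≤ M)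
    (t : ℕ → ℝ) (hpos : ∀ j, 1 ≤ j → 0 < t j) (ht1 : 2 ≤ t 1)
    (hlac : ∀ j, 1 ≤ j → 1 + 1 / M ≤ t (j + 1) / t j)
    (δ δ₁ : ℝ) (hδ : δ = 1 / (2 ^ 11 * (M * Real.log M) ^ ((1 : ℝ) / d)))
    (hδ₁ : δ₁ = 2 ^ (4 * d + 1) * δ ^ d)
    (h : ℕ) (hh : h = ⌈2 ^ (3 * d) * M * Real.log M⌉₊)
    (l : ℕ → ℤ) (hl : ∀ j, l j = ⌊Real.logb 2 (t j / (2 * δ))⌋)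
    (E : ℕ → (Fin d → ℤ) → Set (Fin d → ℝ))
    (hE : ∀ j a, E j a =
      {x : Fin d → ℝ | ∀ k, x k ∈ Set.Icc (0 : ℝ) 1 ∧ |x k - (a k : ℝ) / t j| ≤ δ / t j})
    (Eun : ℕ → Set (Fin d → ℝ))
    (hEun : ∀ j, Eun j = ⋃ a ∈ {a : Fin d → ℤ | ∀ k, a k ∈ Set.Icc (0 : ℤ) ⌈t j⌉}, E j a)
    (A : ℕ → Set (Fin d → ℝ))
    (hA : ∀ j, A j = ⋃ (b : Fin d → ℤ) (ε : Fin d → ℕ) (_ : ∀ k, ε k = 1 ∨ ε k = 2)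
      (_ : ((Set.univ.pi fun k => Set.Ioo ((b k : ℝ) / 2 ^ l j)
              (((b k : ℝ) + ε k) / 2 ^ l j)) ∩ Eun j).Nonempty),
        Set.univ.pi fun k => Set.Ioo ((b k : ℝ) / 2 ^ l j) (((b k : ℝ) + ε k) / 2 ^ l j))
    (C : ℕ → Set (Fin d → ℝ))
    (hC : ∀ i, C i = ⋂ j ∈ Finset.Icc 1 i,
      (Set.univ.pi fun _ : Fin d => Set.Icc (0 : ℝ) 1) \ A j)
    (i : ℕ) (hi : 1 ≤ i) (hne : volume (C i) ≠ 0) :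
    volume (A (i + h) ∩ C i) ≤ ENNReal.ofReal δ₁ * volume (C i) := by
  classical
  -- ## basic positivity facts
  have hM0 : (0:ℝ) < M := by linarith
  have hM1 : (1:ℝ) ≤ M := by linarith
  have hlogM2 : (2:ℝ) ≤ Real.log M := by
    have h8 : Real.log 8 ≤ Real.log M := Real.log_le_log (by norm_num) hM
    have h83 : Real.log 8 = 3 * Real.log 2 := by
      rw [show (8:ℝ) = 2^(3:ℕ) by norm_num, Real.log_pow]; push_cast; ring
    have := Real.log_two_gt_d9
    linarith
  have hlogMpos : (0:ℝ) < Real.log M := by linarith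
  have hMlogM1 : (1:ℝ) ≤ M * Real.log M := by nlinarith
  have hdR : (1:ℝ) ≤ (d:ℝ) := by exact_mod_cast hd
  have hrpow1 : (1:ℝ) ≤ (M * Real.log M) ^ ((1 : ℝ) / d) :=
    Real.one_le_rpow hMlogM1 (by positivity)
  have hδpos : 0 < δ := by rw [hδ]; positivity
  have hδ11 : δ ≤ 1 / 2 ^ 11 := by
    rw [hδ]
    apply div_le_div_of_nonneg_left (by norm_num) (by norm_num)
    nlinarith
  have hδone : δ ≤ 1 := hδ11.trans (by norm_num)
  -- ## monotonicity and growth of t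
  have hstept : ∀ j, 1 ≤ j → (1 + 1/M) * t j ≤ t (j+1) := by
    intro j hj
    have h1 := hlac j hj
    have h2 := hpos j hj
    have := (le_div_iff₀ h2).mp h1
    linarith
  have h1M : (1:ℝ) ≤ 1 + 1/M := by
    have : 0 < 1/M := by positivity
    linarith
  have hmono : ∀ j n, 1 ≤ j → t j ≤ t (j + n) := by
    intro j n hj
    induction n with
    | zero => simp
    | succ m ih =>
      have hs := hstept (j+m) (by omega)
      have hpm := hpos (j+m) (by omega)
      have : t (j+m) ≤ t (j+m+1) := by nlinarith
      calc t j ≤ t (j+m) := ih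
      _ ≤ t (j + (m+1)) := by rw [show j + (m+1) = j+m+1 by omega]; exact this
  have ht2 : ∀ j, 1 ≤ j → 2 ≤ t j := by
    intro j hj
    have := hmono 1 (j-1) le_rfl
    rw [show 1 + (j-1) = j by omega] at this
    linarith
  have hgrow : ∀ n : ℕ, (1 + 1/M)^n * t i ≤ t (i + n) := by
    intro n
    induction n with
    | zero => simp
    | succ m ih =>
      have hs := hstept (i+m) (by omega)
      have h1Mp : (0:ℝ) < 1 + 1/M := by linarith
      calc (1+1/M)^(m+1) * t i = (1+1/M) * ((1+1/M)^m * t i) := by ring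
      _ ≤ (1+1/M) * t (i+m) := by nlinarith [pow_pos h1Mp m]
      _ ≤ t (i + (m+1)) := by rw [show i + (m+1) = i+m+1 by omega]; exact hs
  -- ## scales
  have hTpos : 0 < t (i+h) := hpos _ (by omega)
  have hti2 : 2 ≤ t i := ht2 i hi
  have htipos : 0 < t i := by linarith
  have hPspos : (0:ℝ) < 2 ^ (l (i+h)) := by positivity
  have hPsbounds := aux_zpow_floor_logb (x := t (i+h)/(2*δ)) (by positivity)
  rw [← hl (i+h)] at hPsbounds
  have hs1 : 2*δ*(2:ℝ)^(l (i+h)) ≤ t (i+h) := by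
    have := hPsbounds.1
    rw [le_div_iff₀ (by positivity)] at this
    linarith
  have hs2 : t (i+h) ≤ 4*δ*(2:ℝ)^(l (i+h)) := by
    have := hPsbounds.2
    rw [div_lt_iff₀ (by positivity)] at this
    nlinarith
  have hPpos : (0:ℝ) < 2 ^ (l i) := by positivity
  have hPbounds := aux_zpow_floor_logb (x := t i/(2*δ)) (by positivity)
  rw [← hl i] at hPbounds
  have hp1 : 2*δ*(2:ℝ)^(l i) ≤ t i := by
    have := hPbounds.1
    rw [le_div_iff₀ (by positivity)] at this
    linarith
  have hp2 : t i ≤ 4*δ*(2:ℝ)^(l i) := by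
    have := hPbounds.2
    rw [div_lt_iff₀ (by positivity)] at this
    nlinarith
  -- l is nonneg and monotone up to i
  have hlmono : ∀ j, 1 ≤ j → j ≤ i → 0 ≤ l j ∧ l j ≤ l i := by
    intro j hj hji
    have htj2 : 2 ≤ t j := ht2 j hj
    have htji : t j ≤ t i := by
      have := hmono j (i - j) hj
      rw [show j + (i-j) = i by omega] at this
      exact this
    constructor
    · rw [hl j]
      apply Int.floor_nonneg.mpr
      apply Real.logb_nonneg (by norm_num)
      rw [le_div_iff₀ (by positivity)]
      nlinarith
    · rw [hl j, hl i]
      apply Int.floor_le_floor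
      exact Real.logb_le_logb_of_le (by norm_num) (by positivity) (by gcongr)
  -- ## the grid scale
  obtain ⟨N, hN⟩ : ∃ N : ℕ, (N:ℝ) = 2 ^ (l i) := by
    refine ⟨2 ^ (l i).toNat, ?_⟩
    push_cast
    rw [← zpow_natCast, Int.toNat_of_nonneg (hlmono i hi le_rfl).1]
  have hNpos : (0:ℝ) < N := hN ▸ hPpos
  obtain ⟨S, hS⟩ : ∃ S : ℝ, S = ((N:ℝ))⁻¹ := ⟨_, rfl⟩
  have hSpos : 0 < S := by rw [hS]; positivity
  -- ## numeric core : T*S is large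
  have hM2pos : (0:ℝ) < M^(2:ℝ) := by positivity
  have hTS : 32 * (d:ℝ) ≤ t (i+h) * S := by
    have hh1 : 2^(3*d) * M * Real.log M ≤ (h:ℝ) := by
      rw [hh]; exact Nat.le_ceil _
    have hlog1M : 8/(9*M) ≤ Real.log (1 + 1/M) := by
      have hMM : (0:ℝ) < M + 1 := by linarith
      have he : Real.exp (1/(M+1)) ≤ 1 + 1/M := by
        have h0 := Real.add_one_le_exp (-(1/(M+1)))
        have h1 : 0 < 1 - 1/(M+1) := by
          rw [sub_pos, div_lt_one hMM]; linarith
        rw [Real.exp_neg] at h0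
        have h2 : 1 - 1/(M+1) ≤ (Real.exp (1/(M+1)))⁻¹ := by linarith
        have h4 : Real.exp (1/(M+1)) ≤ (1 - 1/(M+1))⁻¹ := by
          rw [← inv_inv (Real.exp (1/(M+1)))]
          exact inv_anti₀ h1 h2
        have h5 : (1 - 1/(M+1))⁻¹ = 1 + 1/M := by
          rw [show 1 - 1/(M+1) = M/(M+1) by field_simp; ring]
          rw [show (1:ℝ) + 1/M = (M+1)/M by field_simp]
          rw [inv_div]
        linarith [h5 ▸ h4]
      have h6 : 1/(M+1) ≤ Real.log (1+1/M) :=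
        (Real.le_log_iff_exp_le (by positivity)).mpr he
      have h7 : 8/(9*M) ≤ 1/(M+1) := by
        rw [div_le_div_iff₀ (by positivity) hMM]; nlinarith
      linarith
    have h8d : (2:ℝ)^(3*d) = 8^d := by rw [pow_mul]; norm_num
    have hpowM : M ^ ((8:ℝ)/9 * 8^d) ≤ (1 + 1/M)^h := by
      have hlhs : M ^ ((8:ℝ)/9 * 8^d) = Real.exp (Real.log M * ((8:ℝ)/9 * 8^d)) :=
        Real.rpow_def_of_pos hM0 _
      have hrhs : (1+1/M)^h = Real.exp ((h:ℝ) * Real.log (1+1/M)) := by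
        rw [Real.exp_nat_mul, Real.exp_log (by positivity)]
      rw [hlhs, hrhs]
      apply Real.exp_le_exp.mpr
      have hXY : (2^(3*d) * M * Real.log M) * (8/(9*M)) = Real.log M * ((8:ℝ)/9 * 8^d) := by
        rw [← h8d]; field_simp
      calc Real.log M * ((8:ℝ)/9 * 8^d) = (2^(3*d) * M * Real.log M) * (8/(9*M)) := hXY.symm
      _ ≤ (h:ℝ) * Real.log (1+1/M) := by
          apply mul_le_mul hh1 hlog1M (by positivity)
          exact le_trans (by positivity) hh1
    have hδlb : 1/(2^11 * M^(2:ℝ)) ≤ δ := by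
      rw [hδ]
      apply div_le_div_of_nonneg_left (by norm_num) (by positivity)
      have hr : (M * Real.log M) ^ ((1:ℝ)/d) ≤ M^(2:ℝ) := by
        have h1 : M * Real.log M ≤ M^(2:ℝ) := by
          rw [show (2:ℝ) = ((2:ℕ):ℝ) by norm_num, Real.rpow_natCast]
          nlinarith [Real.log_le_sub_one_of_pos hM0]
        have h1d : (1:ℝ)/d ≤ 1 := by
          rw [div_le_one (by positivity)]; exact hdR
        calc (M * Real.log M) ^ ((1:ℝ)/d) ≤ (M^(2:ℝ))^((1:ℝ)/d) :=
              Real.rpow_le_rpow (by positivity) h1 (by positivity)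
        _ = M ^ ((2:ℝ)*(1/d)) := by rw [← Real.rpow_mul hM0.le]
        _ ≤ M ^ (2:ℝ) := by
              apply Real.rpow_le_rpow_of_exponent_le hM1
              nlinarith
      nlinarith [hr]
    have hNti : 2*δ*(N:ℝ) ≤ t i := by rw [hN]; exact hp1
    have hTS1 : 2*δ*(t (i+h)/t i) ≤ t (i+h) * S := by
      apply le_of_mul_le_mul_right _ (by positivity : (0:ℝ) < (N:ℝ)*t i)
      have e1 : 2*δ*(t (i+h)/t i) * ((N:ℝ) * t i) = 2*δ*(N:ℝ) * t (i+h) := by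
        field_simp
      have e2 : (t (i+h) * S) * ((N:ℝ) * t i) = t (i+h) * t i := by
        rw [hS]; field_simp
      rw [e1, e2]
      nlinarith
    have hgrow_div : (1+1/M)^h ≤ t (i+h)/t i :=
      (le_div_iff₀ htipos).mpr (by linarith [hgrow h])
    have c1 : 2*δ*(M^((8:ℝ)/9 * 8^d)) ≤ t (i+h)*S := by
      have b1 : 2*δ*(M^((8:ℝ)/9 * 8^d)) ≤ 2*δ*((1+1/M)^h) :=
        mul_le_mul_of_nonneg_left hpowM (by positivity)
      have b2 : 2*δ*((1+1/M)^h) ≤ 2*δ*(t (i+h)/t i) :=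
        mul_le_mul_of_nonneg_left hgrow_div (by positivity)
      linarith [hTS1]
    have c2 : 2*(1/(2^11 * M^(2:ℝ)))*(M^((8:ℝ)/9 * 8^d)) ≤ 2*δ*(M^((8:ℝ)/9 * 8^d)) := by
      have hMe : (0:ℝ) < M^((8:ℝ)/9 * 8^d) := by positivity
      exact mul_le_mul_of_nonneg_right (by linarith [hδlb]) hMe.le
    have c3 : 2*(1/(2^11 * M^(2:ℝ)))*(M^((8:ℝ)/9 * 8^d)) = (1/2^10) * M^((8:ℝ)/9 * 8^d - 2) := by
      rw [Real.rpow_sub hM0]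
      field_simp
    have he2nn : (0:ℝ) ≤ (8:ℝ)/9 * 8^d - 2 := by
      have : (8:ℝ)^1 ≤ (8:ℝ)^d := pow_le_pow_right₀ (by norm_num) hd
      simp only [pow_one] at this
      linarith
    have c4 : (1/2^10) * (2:ℝ)^((8:ℝ)/3 * 8^d - 6) ≤ (1/2^10) * M^((8:ℝ)/9 * 8^d - 2) := by
      have h23 : (2:ℝ)^(3:ℝ) = 8 := by
        rw [show (3:ℝ) = ((3:ℕ):ℝ) by norm_num, Real.rpow_natCast]; norm_num
      have step : (8:ℝ)^((8:ℝ)/9 * 8^d - 2) ≤ M^((8:ℝ)/9 * 8^d - 2) :=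
        Real.rpow_le_rpow (by norm_num) hM he2nn
      have conv : (8:ℝ)^((8:ℝ)/9 * 8^d - 2) = (2:ℝ)^((8:ℝ)/3 * 8^d - 6) := by
        calc (8:ℝ)^((8:ℝ)/9 * 8^d - 2) = ((2:ℝ)^(3:ℝ))^((8:ℝ)/9 * 8^d - 2) := by rw [h23]
        _ = (2:ℝ)^((3:ℝ)*((8:ℝ)/9 * 8^d - 2)) := by
            rw [← Real.rpow_mul (by norm_num : (0:ℝ) ≤ 2)]
        _ = (2:ℝ)^((8:ℝ)/3 * 8^d - 6) := by congr 1; ring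
      rw [← conv]
      exact mul_le_mul_of_nonneg_left step (by norm_num)
    have c5 : (2:ℝ)^((d:ℝ)+4) ≤ (1/2^10) * (2:ℝ)^((8:ℝ)/3 * 8^d - 6) := by
      have hrw : (1/2^10 : ℝ) * (2:ℝ)^((8:ℝ)/3 * 8^d - 6) = (2:ℝ)^((8:ℝ)/3 * 8^d - 16) := by
        rw [show (8:ℝ)/3 * 8^d - 16 = ((8:ℝ)/3 * 8^d - 6) + (-(10:ℝ)) by ring,
          Real.rpow_add (by norm_num)]
        rw [show (2:ℝ)^(-(10:ℝ)) = ((2:ℝ)^((10:ℕ):ℝ))⁻¹ by rw [← Real.rpow_neg (by norm_num)]; norm_num]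
        rw [Real.rpow_natCast]
        norm_num
        ring
      rw [hrw]
      apply Real.rpow_le_rpow_of_exponent_le (by norm_num)
      have := aux_nat2 d hd
      have hcast : (3:ℝ)*d + 60 ≤ (8:ℝ)^(d+1) := by exact_mod_cast this
      have h81 : (8:ℝ)^(d+1) = 8 * 8^d := by ring
      rw [h81] at hcast
      linarith [hcast]
    have c6 : 32*(d:ℝ) ≤ (2:ℝ)^((d:ℝ)+4) := by
      have hrw : (2:ℝ)^((d:ℝ)+4) = (2:ℝ)^d * 16 := by
        rw [Real.rpow_add (by norm_num), Real.rpow_natCast]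
        norm_num
      rw [hrw]
      have := aux_nat1 d hd
      have hcast : (2:ℝ)*d ≤ (2:ℝ)^d := by exact_mod_cast this
      linarith [hcast]
    calc 32*(d:ℝ) ≤ (2:ℝ)^((d:ℝ)+4) := c6
    _ ≤ (1/2^10) * (2:ℝ)^((8:ℝ)/3 * 8^d - 6) := c5
    _ ≤ (1/2^10) * M^((8:ℝ)/9 * 8^d - 2) := c4
    _ = 2*(1/(2^11 * M^(2:ℝ)))*(M^((8:ℝ)/9 * 8^d)) := c3.symm
    _ ≤ 2*δ*(M^((8:ℝ)/9 * 8^d)) := c2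
    _ ≤ t (i+h) * S := c1
  -- ## the 1-D envelope of A (i+h)
  obtain ⟨V, hV⟩ : ∃ V : ℤ → Set ℝ, V = fun a : ℤ => Set.Ioo
      (((⌊((a:ℝ)/t (i+h) - δ/t (i+h))*2^(l (i+h))⌋ - 1 : ℤ):ℝ)/2^(l (i+h)))
      (((⌊((a:ℝ)/t (i+h) - δ/t (i+h))*2^(l (i+h))⌋ + 3 : ℤ):ℝ)/2^(l (i+h))) := ⟨_, rfl⟩
  obtain ⟨W, hW⟩ : ∃ W : Set ℝ, W = ⋃ a ∈ Finset.Icc (0:ℤ) ⌈t (i+h)⌉, V a := ⟨_, rfl⟩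
  have hAW : A (i+h) ⊆ Set.univ.pi (fun _ : Fin d => W) := by
    intro x hx
    rw [hA (i+h)] at hx
    simp only [Set.mem_iUnion] at hx
    obtain ⟨b, ε, hε, hbne, hxbox⟩ := hx
    obtain ⟨y, hybox, hyE⟩ := hbne
    rw [hEun (i+h)] at hyE
    simp only [Set.mem_iUnion, Set.mem_setOf_eq] at hyE
    obtain ⟨a, ha, hyEa⟩ := hyE
    rw [hE (i+h) a] at hyEa
    simp only [Set.mem_setOf_eq] at hyEa
    intro k _
    have hyk : y k ∈ Set.Ioo ((b k : ℝ) / 2 ^ l (i+h)) (((b k : ℝ) + ε k) / 2 ^ l (i+h)) :=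
      hybox k (Set.mem_univ k)
    obtain ⟨hyIcc, habs⟩ := hyEa k
    rw [abs_le] at habs
    have hδT : 2*(δ/t (i+h))*(2:ℝ)^(l (i+h)) ≤ 1 := by
      have e : 2*(δ/t (i+h))*(2:ℝ)^(l (i+h)) = (2*δ*(2:ℝ)^(l (i+h)))/t (i+h) := by
        field_simp
      rw [e, div_le_one hTpos]
      linarith only [hs1]
    have hsub2 : Set.Ioo ((b k : ℝ) / 2 ^ l (i+h)) (((b k : ℝ) + ε k) / 2 ^ l (i+h)) ⊆
        V (a k) := by
      rw [hV]
      apply aux_boxV hPspos hδT (hε k)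
      · calc (b k : ℝ) / 2 ^ l (i+h) < y k := hyk.1
        _ ≤ (a k : ℝ)/t (i+h) + δ/t (i+h) := by linarith [habs.2]
        _ = ((a k : ℝ)/t (i+h) - δ/t (i+h)) + 2*(δ/t (i+h)) := by ring
      · calc (a k : ℝ)/t (i+h) - δ/t (i+h) ≤ y k := by linarith [habs.1]
        _ < ((b k : ℝ) + ε k) / 2 ^ l (i+h) := hyk.2
    have hxk : x k ∈ V (a k) := hsub2 (hxbox k (Set.mem_univ k))
    show x k ∈ W
    rw [hW]
    simp only [Set.mem_iUnion]
    exact ⟨a k, Finset.mem_Icc.mpr (ha k), hxk⟩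
  have hVvol : ∀ a : ℤ, volume (V a) = ENNReal.ofReal (4/(2:ℝ)^(l (i+h))) := by
    intro a
    rw [hV]
    simp only
    rw [Real.volume_Ioo]
    congr 1
    rw [div_sub_div_same]
    congr 1
    push_cast
    ring
  -- ## 1-D counting bound
  have hW1 : ∀ c : ℝ, volume (W ∩ Set.Ioo c (c+S))
      ≤ ENNReal.ofReal ((t (i+h)*S + 2) * (4/(2:ℝ)^(l (i+h)))) := by
    intro c
    obtain ⟨F, hF⟩ : ∃ F : Finset ℤ, F = (Finset.Icc (0:ℤ) ⌈t (i+h)⌉).filter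
        (fun a => (V a ∩ Set.Ioo c (c+S)).Nonempty) := ⟨_, rfl⟩
    have hsub : W ∩ Set.Ioo c (c+S) ⊆ ⋃ a ∈ F, V a := by
      rintro x ⟨hxW, hxI⟩
      rw [hW] at hxW
      simp only [Set.mem_iUnion] at hxW
      obtain ⟨a, haF, hxV⟩ := hxW
      simp only [Set.mem_iUnion]
      exact ⟨a, by rw [hF]; exact Finset.mem_filter.mpr ⟨haF, ⟨x, hxV, hxI⟩⟩, hxV⟩
    have hTPs : t (i+h) ≤ 4*δ*(2:ℝ)^(l (i+h)) := hs2
    have hcard : (F.card : ℝ) ≤ t (i+h)*S + 2 := by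
      have hFsub : F ⊆ Finset.Ioo (⌊t (i+h)*c - 12*δ⌋)
          (⌈t (i+h)*c + t (i+h)*S + 9*δ⌉) := by
        intro a haF
        rw [hF, Finset.mem_filter] at haF
        obtain ⟨haIcc, x, hxV, hxI⟩ := haF
        rw [hV] at hxV
        simp only [Set.mem_Ioo] at hxV hxI
        obtain ⟨hx1, hx2⟩ := hxV
        obtain ⟨hx3, hx4⟩ := hxI
        push_cast at hx1 hx2
        rw [Finset.mem_Ioo]
        have hfl1 : ((a:ℝ)/t (i+h) - δ/t (i+h))*(2:ℝ)^(l (i+h)) - 1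
            < (⌊((a:ℝ)/t (i+h) - δ/t (i+h))*(2:ℝ)^(l (i+h))⌋ : ℝ) := Int.sub_one_lt_floor _
        have hfl2 : ((⌊((a:ℝ)/t (i+h) - δ/t (i+h))*(2:ℝ)^(l (i+h))⌋ : ℝ))
            ≤ ((a:ℝ)/t (i+h) - δ/t (i+h))*(2:ℝ)^(l (i+h)) := Int.floor_le _
        have hαT : ((a:ℝ)/t (i+h) - δ/t (i+h)) * t (i+h) = (a:ℝ) - δ := by
          field_simp
        have e : ((a:ℝ)/t (i+h) - δ/t (i+h))*(2:ℝ)^(l (i+h))*t (i+h)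
            = ((a:ℝ) - δ)*(2:ℝ)^(l (i+h)) := by
          field_simp
        have hz1 : (⌊((a:ℝ)/t (i+h) - δ/t (i+h))*(2:ℝ)^(l (i+h))⌋ : ℝ)*t (i+h)
            ≤ ((a:ℝ) - δ)*(2:ℝ)^(l (i+h)) := by
          have := mul_le_mul_of_nonneg_right hfl2 hTpos.le
          rw [e] at this
          exact this
        have hz2 : ((a:ℝ) - δ)*(2:ℝ)^(l (i+h))
            < ((⌊((a:ℝ)/t (i+h) - δ/t (i+h))*(2:ℝ)^(l (i+h))⌋ : ℝ) + 1)*t (i+h) := by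
          have hlt := Int.lt_floor_add_one (((a:ℝ)/t (i+h) - δ/t (i+h))*(2:ℝ)^(l (i+h)))
          have := mul_lt_mul_of_pos_right hlt hTpos
          rw [e] at this
          exact this
        have hδPs : (0:ℝ) < δ*(2:ℝ)^(l (i+h)) := mul_pos hδpos hPspos
        constructor
        · apply Int.floor_lt.mpr
          have m1 : c * (2:ℝ)^(l (i+h))
              < (⌊((a:ℝ)/t (i+h) - δ/t (i+h))*(2:ℝ)^(l (i+h))⌋ : ℝ) + 3 :=
            (lt_div_iff₀ hPspos).mp (hx3.trans hx2)
          have m1T := mul_lt_mul_of_pos_right m1 hTpos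
          have m5 : (t (i+h)*c)*(2:ℝ)^(l (i+h)) < ((a:ℝ) + 11*δ)*(2:ℝ)^(l (i+h)) := by
            nlinarith only [m1T, hz1, hTPs, hδPs]
          have m6 : t (i+h)*c < (a:ℝ) + 11*δ := lt_of_mul_lt_mul_right m5 hPspos.le
          linarith only [m6, hδpos]
        · apply Int.lt_ceil.mpr
          have m1 : (⌊((a:ℝ)/t (i+h) - δ/t (i+h))*(2:ℝ)^(l (i+h))⌋ : ℝ) - 1
              < (c+S) * (2:ℝ)^(l (i+h)) :=
            (div_lt_iff₀ hPspos).mp (hx1.trans hx4)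
          have m1T := mul_lt_mul_of_pos_right m1 hTpos
          have m5 : ((a:ℝ))*(2:ℝ)^(l (i+h)) < (t (i+h)*c + t (i+h)*S + 9*δ)*(2:ℝ)^(l (i+h)) := by
            nlinarith only [m1T, hz2, hTPs, hδPs]
          exact lt_of_mul_lt_mul_right m5 hPspos.le
      have h1 : F.card ≤ (Finset.Ioo (⌊t (i+h)*c - 12*δ⌋)
          (⌈t (i+h)*c + t (i+h)*S + 9*δ⌉)).card := Finset.card_le_card hFsub
      rw [Int.card_Ioo] at h1
      have hTSpos : (0:ℝ) < t (i+h)*S := mul_pos hTpos hSpos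
      rcases le_or_gt (⌈t (i+h)*c + t (i+h)*S + 9*δ⌉ - ⌊t (i+h)*c - 12*δ⌋ - 1) 0 with hle|hgt
      · have : F.card = 0 := by
          have := Int.toNat_of_nonpos hle
          omega
        rw [this]
        push_cast
        linarith
      · have hcc : (F.card : ℝ) ≤ ((⌈t (i+h)*c + t (i+h)*S + 9*δ⌉ - ⌊t (i+h)*c - 12*δ⌋ - 1 : ℤ) : ℝ) := by
          rw [← Int.toNat_of_nonneg hgt.le]
          exact_mod_cast h1
        have b1 : (⌈t (i+h)*c + t (i+h)*S + 9*δ⌉ : ℝ) < t (i+h)*c + t (i+h)*S + 9*δ + 1 :=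
          Int.ceil_lt_add_one _
        have b2 : t (i+h)*c - 12*δ - 1 < (⌊t (i+h)*c - 12*δ⌋ : ℝ) := Int.sub_one_lt_floor _
        push_cast at hcc
        have hδ21 : 21*δ ≤ 1 := by
          have := hδ11
          norm_num at this ⊢
          linarith
        linarith
    calc volume (W ∩ Set.Ioo c (c+S)) ≤ volume (⋃ a ∈ F, V a) := measure_mono hsub
    _ ≤ ∑ a ∈ F, volume (V a) := measure_biUnion_finset_le F V
    _ = ∑ _a ∈ F, ENNReal.ofReal (4/(2:ℝ)^(l (i+h))) := by
        apply Finset.sum_congr rfl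
        intro a _
        exact hVvol a
    _ = F.card • ENNReal.ofReal (4/(2:ℝ)^(l (i+h))) := Finset.sum_const _
    _ = (F.card : ENNReal) * ENNReal.ofReal (4/(2:ℝ)^(l (i+h))) := nsmul_eq_mul _ _
    _ ≤ ENNReal.ofReal ((t (i+h)*S + 2) * (4/(2:ℝ)^(l (i+h)))) := by
        rw [← ENNReal.ofReal_natCast F.card, ← ENNReal.ofReal_mul (by positivity)]
        apply ENNReal.ofReal_le_ofReal
        apply mul_le_mul_of_nonneg_right hcard (by positivity)
  -- ## the grid cells
  obtain ⟨Q, hQ⟩ : ∃ Q : (Fin d → ℤ) → Set (Fin d → ℝ),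
      Q = fun m => Set.univ.pi fun k => Set.Ioo ((m k : ℝ)*S) (((m k : ℝ)+1)*S) := ⟨_, rfl⟩
  obtain ⟨G, hG⟩ : ∃ G : Finset (Fin d → ℤ),
      G = Fintype.piFinset (fun _ : Fin d => Finset.Icc (0:ℤ) ((N:ℤ) - 1)) := ⟨_, rfl⟩
  have hQmeas : ∀ m, MeasurableSet (Q m) := by
    intro m
    rw [hQ]
    exact MeasurableSet.univ_pi (fun k => measurableSet_Ioo)
  have hvolQ : ∀ m, volume (Q m) = ENNReal.ofReal (S^d) := by
    intro m
    rw [hQ]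
    simp only
    rw [volume_pi_pi]
    have : ∀ k : Fin d, volume (Set.Ioo ((m k : ℝ)*S) (((m k : ℝ)+1)*S))
        = ENNReal.ofReal S := by
      intro k
      rw [Real.volume_Ioo]
      congr 1
      ring
    rw [Finset.prod_congr rfl (fun k _ => this k), Finset.prod_const,
      Finset.card_univ, Fintype.card_fin, ← ENNReal.ofReal_pow hSpos.le]
  have hNS : (N:ℝ)*S = 1 := by
    rw [hS]
    field_simp
  have hQ01 : ∀ m ∈ G, Q m ⊆ Set.univ.pi (fun _ : Fin d => Set.Icc (0:ℝ) 1) := by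
    intro m hm x hx k _
    rw [hG, Fintype.mem_piFinset] at hm
    obtain ⟨hm0, hm1⟩ := Finset.mem_Icc.mp (hm k)
    rw [hQ] at hx
    obtain ⟨hx0, hx1⟩ := hx k (Set.mem_univ k)
    have hm0' : (0:ℝ) ≤ (m k : ℝ) := by exact_mod_cast hm0
    have hm1' : (m k : ℝ) + 1 ≤ (N:ℝ) := by
      have h9 : (m k : ℝ) ≤ (N:ℝ) - 1 := by exact_mod_cast hm1
      linarith only [h9]
    constructor
    · have h9 : (0:ℝ) ≤ (m k : ℝ)*S := mul_nonneg hm0' hSpos.le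
      linarith only [h9, hx0]
    · have h9 : ((m k : ℝ)+1)*S ≤ (N:ℝ)*S := mul_le_mul_of_nonneg_right hm1' hSpos.le
      rw [hNS] at h9
      linarith only [h9, hx1]
  -- ## absorption: a cell meeting A j (1 ≤ j ≤ i) is inside it
  have habsorbj : ∀ j, 1 ≤ j → j ≤ i → ∀ m : Fin d → ℤ,
      (Q m ∩ A j).Nonempty → Q m ⊆ A j := by
    intro j hj hji m hnem
    obtain ⟨x, hxQ, hxA⟩ := hnem
    rw [hA j] at hxA
    simp only [Set.mem_iUnion] at hxA
    obtain ⟨b, ε, hε, hbne, hxbox⟩ := hxA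
    obtain ⟨h0j, hjli⟩ := hlmono j hj hji
    have hBeq : ∀ q : ℤ, (q:ℝ)/2^(l j) = ((q * 2^((l i - l j).toNat) : ℤ):ℝ)*S := by
      intro q
      have h2n : ((2:ℝ)^((l i - l j).toNat) : ℝ) = (2:ℝ)^(l i - l j) := by
        rw [← zpow_natCast, Int.toNat_of_nonneg (by omega)]
      push_cast
      rw [h2n, hS, hN, zpow_sub₀ (by norm_num : (2:ℝ) ≠ 0)]
      have hz1 : ((2:ℝ)^(l j)) ≠ 0 := zpow_ne_zero _ (by norm_num)
      have hz2 : ((2:ℝ)^(l i)) ≠ 0 := zpow_ne_zero _ (by norm_num)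
      field_simp
      try ring
    have hboxsub : Q m ⊆ Set.univ.pi
        (fun k => Set.Ioo ((b k : ℝ) / 2 ^ l j) (((b k : ℝ) + ε k) / 2 ^ l j)) := by
      intro y hy k _
      have hIooeq : Set.Ioo ((b k : ℝ) / 2 ^ l j) (((b k : ℝ) + ε k) / 2 ^ l j)
          = Set.Ioo (((b k * 2^((l i - l j).toNat) : ℤ):ℝ)*S)
            ((((b k + (ε k:ℤ)) * 2^((l i - l j).toNat) : ℤ):ℝ)*S) := by
        rw [← hBeq (b k), ← hBeq (b k + (ε k:ℤ))]
        push_cast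
        norm_num
      have hxk : x k ∈ Set.Ioo (((b k * 2^((l i - l j).toNat) : ℤ):ℝ)*S)
          ((((b k + (ε k:ℤ)) * 2^((l i - l j).toNat) : ℤ):ℝ)*S) := by
        rw [← hIooeq]
        exact hxbox k (Set.mem_univ k)
      have hxQk : x k ∈ Set.Ioo ((m k : ℝ)*S) (((m k : ℝ)+1)*S) := by
        rw [hQ] at hxQ
        exact hxQ k (Set.mem_univ k)
      show y k ∈ Set.Ioo ((b k : ℝ) / 2 ^ l j) (((b k : ℝ) + ε k) / 2 ^ l j)
      rw [hIooeq]
      apply aux_cell_subset hSpos ⟨x k, hxQk, hxk⟩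
      rw [hQ] at hy
      exact hy k (Set.mem_univ k)
    intro y hy
    rw [hA j]
    simp only [Set.mem_iUnion]
    exact ⟨b, ε, hε, hbne, hboxsub hy⟩
  -- ## key real inequality
  have hδ₁nn : 0 ≤ δ₁ := by rw [hδ₁]; positivity
  have hkey : ((t (i+h)*S + 2) * (4/(2:ℝ)^(l (i+h))))^d ≤ δ₁ * S^d := by
    have hTSpos : (0:ℝ) < t (i+h)*S := mul_pos hTpos hSpos
    have hd1 : (0:ℝ) < (d:ℝ) := by linarith only [hdR]
    have hfrac : 2/(t (i+h)*S) ≤ 1/(16*(d:ℝ)) := by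
      rw [div_le_div_iff₀ hTSpos (by positivity)]
      nlinarith only [hTS]
    have hexp2 : (1 + 2/(t (i+h)*S))^d ≤ 2 := by
      have e1 : (1 + 2/(t (i+h)*S)) ≤ Real.exp (2/(t (i+h)*S)) := by
        linarith only [Real.add_one_le_exp (2/(t (i+h)*S))]
      have e2 : (1 + 2/(t (i+h)*S))^d ≤ Real.exp (2/(t (i+h)*S))^d :=
        pow_le_pow_left₀ (by positivity) e1 d
      rw [← Real.exp_nat_mul] at e2
      have e4 : (d:ℝ) * (2/(t (i+h)*S)) ≤ (d:ℝ) * (1/(16*(d:ℝ))) :=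
        mul_le_mul_of_nonneg_left hfrac (by positivity)
      have e5 : (d:ℝ)*(1/(16*(d:ℝ))) = 1/16 := by
        field_simp
      rw [e5] at e4
      have e3 : (d:ℝ) * (2/(t (i+h)*S)) ≤ Real.log 2 := by
        have := Real.log_two_gt_d9
        linarith only [e4, this]
      calc (1 + 2/(t (i+h)*S))^d ≤ Real.exp ((d:ℝ)*(2/(t (i+h)*S))) := e2
      _ ≤ Real.exp (Real.log 2) := Real.exp_le_exp.mpr e3
      _ = 2 := Real.exp_log (by norm_num)
    have h4Ps : 4/(2:ℝ)^(l (i+h)) ≤ 16*δ/t (i+h) := by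
      rw [div_le_div_iff₀ hPspos hTpos]
      linarith only [hs2]
    have hmain1 : (t (i+h)*S + 2)*(4/(2:ℝ)^(l (i+h))) ≤ 16*δ*S*(1 + 2/(t (i+h)*S)) := by
      have lhs_le : (t (i+h)*S + 2)*(4/(2:ℝ)^(l (i+h))) ≤ (t (i+h)*S + 2)*(16*δ/t (i+h)) :=
        mul_le_mul_of_nonneg_left h4Ps (by positivity)
      have eq1 : (t (i+h)*S + 2)*(16*δ/t (i+h)) = 16*δ*S*(1 + 2/(t (i+h)*S)) := by
        field_simp
      rw [eq1] at lhs_le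
      exact lhs_le
    calc ((t (i+h)*S + 2) * (4/(2:ℝ)^(l (i+h))))^d ≤ (16*δ*S*(1 + 2/(t (i+h)*S)))^d :=
          pow_le_pow_left₀ (by positivity) hmain1 d
    _ = (16*δ*S)^d * (1 + 2/(t (i+h)*S))^d := mul_pow _ _ _
    _ ≤ (16*δ*S)^d * 2 := mul_le_mul_of_nonneg_left hexp2 (by positivity)
    _ = δ₁ * S^d := by
        rw [hδ₁, pow_add, pow_mul, mul_pow, mul_pow]
        norm_num
        ring
  -- ## per-cube bound
  have hcube : ∀ m : Fin d → ℤ, volume (A (i+h) ∩ Q m)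
      ≤ ENNReal.ofReal δ₁ * ENNReal.ofReal (S^d) := by
    intro m
    have hsub : A (i+h) ∩ Q m ⊆ Set.univ.pi
        (fun k => W ∩ Set.Ioo ((m k : ℝ)*S) ((m k : ℝ)*S + S)) := by
      rintro x ⟨hxA, hxQ⟩ k _
      refine ⟨hAW hxA k (Set.mem_univ k), ?_⟩
      rw [hQ] at hxQ
      have hxk : x k ∈ Set.Ioo ((m k : ℝ)*S) (((m k : ℝ)+1)*S) := hxQ k (Set.mem_univ k)
      have e : ((m k : ℝ)+1)*S = (m k : ℝ)*S + S := by ring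
      rw [e] at hxk
      exact hxk
    calc volume (A (i+h) ∩ Q m)
        ≤ volume (Set.univ.pi (fun k => W ∩ Set.Ioo ((m k:ℝ)*S) ((m k:ℝ)*S + S))) :=
          measure_mono hsub
    _ = ∏ k : Fin d, volume (W ∩ Set.Ioo ((m k:ℝ)*S) ((m k:ℝ)*S + S)) := volume_pi_pi _
    _ ≤ ∏ _k : Fin d, ENNReal.ofReal ((t (i+h)*S + 2) * (4/(2:ℝ)^(l (i+h)))) :=
          Finset.prod_le_prod' (fun k _ => hW1 ((m k:ℝ)*S))
    _ = ENNReal.ofReal ((t (i+h)*S + 2) * (4/(2:ℝ)^(l (i+h))))^d := by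
          rw [Finset.prod_const, Finset.card_univ, Fintype.card_fin]
    _ = ENNReal.ofReal (((t (i+h)*S + 2) * (4/(2:ℝ)^(l (i+h))))^d) :=
          (ENNReal.ofReal_pow (by positivity) d).symm
    _ ≤ ENNReal.ofReal (δ₁ * S^d) := ENNReal.ofReal_le_ofReal hkey
    _ = ENNReal.ofReal δ₁ * ENNReal.ofReal (S^d) := ENNReal.ofReal_mul hδ₁nn
  -- ## boundary has measure zero
  have hzero : volume ((Set.univ.pi fun _ : Fin d => Set.Icc (0:ℝ) 1) \ ⋃ m ∈ G, Q m) = 0 := by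
    have hsub : (Set.univ.pi fun _ : Fin d => Set.Icc (0:ℝ) 1) \ (⋃ m ∈ G, Q m)
        ⊆ ⋃ k : Fin d, ⋃ p ∈ Finset.Icc (0:ℤ) (N:ℤ), {x : Fin d → ℝ | x k = (p:ℝ)*S} := by
      rintro x ⟨hx01, hxn⟩
      by_contra hcon
      simp only [Set.mem_iUnion, Set.mem_setOf_eq, not_exists] at hcon
      apply hxn
      have hxk : ∀ k : Fin d, (⌊x k * N⌋ : ℝ) < x k * N ∧ x k * N < (⌊x k * N⌋ : ℝ) + 1
          ∧ 0 ≤ ⌊x k * N⌋ ∧ ⌊x k * N⌋ < (N:ℤ) := by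
        intro k
        obtain ⟨hxk0, hxk1⟩ := hx01 k (Set.mem_univ k)
        have hu0 : 0 ≤ x k * N := mul_nonneg hxk0 hNpos.le
        have hu1 : x k * N ≤ (N:ℝ) := by
          nlinarith only [hxk1, hNpos]
        have hfl : (⌊x k * N⌋ : ℝ) ≤ x k * N := Int.floor_le _
        have hfl1 : x k * N < (⌊x k * N⌋ : ℝ) + 1 := Int.lt_floor_add_one _
        have hne' : x k * N ≠ (⌊x k * N⌋ : ℝ) := by
          intro heq
          have hp0 : 0 ≤ ⌊x k * N⌋ := Int.floor_nonneg.mpr hu0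
          have hpN : ⌊x k * N⌋ ≤ (N:ℤ) := by
            have : (⌊x k * N⌋ : ℝ) ≤ (N:ℝ) := by linarith only [hfl, hu1]
            exact_mod_cast this
          apply hcon k ⌊x k * N⌋ (Finset.mem_Icc.mpr ⟨hp0, hpN⟩)
          calc x k = x k * N * S := by rw [mul_assoc, hNS, mul_one]
          _ = (⌊x k * N⌋ : ℝ) * S := congrArg (fun z => z * S) heq
        have hstrict : (⌊x k * N⌋ : ℝ) < x k * N := lt_of_le_of_ne hfl (fun hf => hne' hf.symm)
        refine ⟨hstrict, hfl1, Int.floor_nonneg.mpr hu0, ?_⟩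
        by_contra hge
        push_neg at hge
        have h1 : (N:ℝ) ≤ (⌊x k * N⌋ : ℝ) := by exact_mod_cast hge
        linarith only [h1, hstrict, hu1]
      refine Set.mem_biUnion (?_ : (fun k => ⌊x k * N⌋) ∈ G) ?_
      · rw [hG, Fintype.mem_piFinset]
        intro k
        obtain ⟨_, _, hp0, hpN⟩ := hxk k
        exact Finset.mem_Icc.mpr ⟨hp0, by omega⟩
      · rw [hQ]
        intro k _
        obtain ⟨hs1', hs2', _, _⟩ := hxk k
        have hxeq : x k * N * S = x k := by
          rw [mul_assoc, hNS, mul_one]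
        constructor
        · have := mul_lt_mul_of_pos_right hs1' hSpos
          rw [hxeq] at this
          exact this
        · have := mul_lt_mul_of_pos_right hs2' hSpos
          rw [hxeq] at this
          calc x k < ((⌊x k * N⌋ : ℝ) + 1) * S := this
          _ = ((⌊x k * N⌋ : ℝ) + 1) * S := rfl
    apply measure_mono_null hsub
    refine measure_iUnion_null fun k => ?_
    refine (measure_biUnion_null_iff (Finset.Icc (0:ℤ) (N:ℤ)).countable_toSet).mpr
      fun p _ => aux_hyperplane d k _
  -- ## good cells
  obtain ⟨G', hG'mem⟩ : ∃ G' : Finset (Fin d → ℤ),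
      ∀ m, m ∈ G' ↔ m ∈ G ∧ ∀ j ∈ Finset.Icc 1 i, ¬(Q m ∩ A j).Nonempty := by
    exact ⟨@Finset.filter _ (fun m => ∀ j ∈ Finset.Icc 1 i, ¬(Q m ∩ A j).Nonempty)
      (fun m => Classical.propDecidable _) G,
      fun m => @Finset.mem_filter _ _ (fun m => Classical.propDecidable _) G m⟩
  have hstep1 : A (i+h) ∩ C i ⊆ (⋃ m ∈ G', A (i+h) ∩ Q m) ∪
      ((Set.univ.pi fun _ : Fin d => Set.Icc (0:ℝ) 1) \ ⋃ m ∈ G, Q m) := by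
    rintro x ⟨hxA, hxC⟩
    have hxCi := hxC
    rw [hC i] at hxCi
    simp only [Set.mem_iInter] at hxCi
    have hx01 : x ∈ (Set.univ.pi fun _ : Fin d => Set.Icc (0:ℝ) 1) :=
      (hxCi i (Finset.mem_Icc.mpr ⟨hi, le_rfl⟩)).1
    by_cases hxU : x ∈ ⋃ m ∈ G, Q m
    · left
      simp only [Set.mem_iUnion] at hxU
      obtain ⟨m, hmG, hxQ⟩ := hxU
      have hmG' : m ∈ G' := by
        refine (hG'mem m).mpr ⟨hmG, fun j hj hne' => ?_⟩
        have hj' := Finset.mem_Icc.mp hj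
        exact (hxCi j hj).2 (habsorbj j hj'.1 hj'.2 m hne' hxQ)
      simp only [Set.mem_iUnion]
      exact ⟨m, hmG', hxA, hxQ⟩
    · right
      exact ⟨hx01, hxU⟩
  have hQdisj : (↑G' : Set (Fin d → ℤ)).PairwiseDisjoint Q := by
    intro m1 _ m2 _ hne12
    refine Set.disjoint_left.mpr fun {x} hx1 hx2 => ?_
    obtain ⟨k, hk⟩ := Function.ne_iff.mp hne12
    rw [hQ] at hx1 hx2
    have a1 : x k ∈ Set.Ioo ((m1 k : ℝ)*S) (((m1 k : ℝ)+1)*S) := hx1 k (Set.mem_univ k)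
    have a2 : x k ∈ Set.Ioo ((m2 k : ℝ)*S) (((m2 k : ℝ)+1)*S) := hx2 k (Set.mem_univ k)
    rcases lt_or_gt_of_ne hk with hlt|hlt
    · have hc : (m1 k : ℝ) + 1 ≤ (m2 k : ℝ) := by exact_mod_cast hlt
      have hc2 := mul_le_mul_of_nonneg_right hc hSpos.le
      linarith only [a1.2, hc2, a2.1]
    · have hc : (m2 k : ℝ) + 1 ≤ (m1 k : ℝ) := by exact_mod_cast hlt
      have hc2 := mul_le_mul_of_nonneg_right hc hSpos.le
      linarith only [a2.2, hc2, a1.1]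
  have hlow : (G'.card : ENNReal) * ENNReal.ofReal (S^d) ≤ volume (C i) := by
    have hsubC : (⋃ m ∈ G', Q m) ⊆ C i := by
      intro x hx
      simp only [Set.mem_iUnion] at hx
      obtain ⟨m, hmG', hxQ⟩ := hx
      obtain ⟨hmG, hdisjm⟩ := (hG'mem m).mp hmG'
      rw [hC i]
      simp only [Set.mem_iInter]
      intro j hj
      exact ⟨hQ01 m hmG hxQ, fun hxA => hdisjm j hj ⟨x, hxQ, hxA⟩⟩
    calc (G'.card : ENNReal) * ENNReal.ofReal (S^d)
        = ∑ _m ∈ G', ENNReal.ofReal (S^d) := by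
          rw [Finset.sum_const, nsmul_eq_mul]
    _ = ∑ m ∈ G', volume (Q m) := Finset.sum_congr rfl (fun m _ => (hvolQ m).symm)
    _ = volume (⋃ m ∈ G', Q m) := (measure_biUnion_finset hQdisj (fun m _ => hQmeas m)).symm
    _ ≤ volume (C i) := measure_mono hsubC
  calc volume (A (i + h) ∩ C i)
      ≤ volume ((⋃ m ∈ G', A (i+h) ∩ Q m) ∪
        ((Set.univ.pi fun _ : Fin d => Set.Icc (0:ℝ) 1) \ ⋃ m ∈ G, Q m)) :=
        measure_mono hstep1
  _ ≤ volume (⋃ m ∈ G', A (i+h) ∩ Q m) +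
      volume ((Set.univ.pi fun _ : Fin d => Set.Icc (0:ℝ) 1) \ ⋃ m ∈ G, Q m) :=
        measure_union_le _ _
  _ = volume (⋃ m ∈ G', A (i+h) ∩ Q m) := by rw [hzero, add_zero]
  _ ≤ ∑ m ∈ G', volume (A (i+h) ∩ Q m) := measure_biUnion_finset_le _ _
  _ ≤ ∑ _m ∈ G', ENNReal.ofReal δ₁ * ENNReal.ofReal (S^d) :=
        Finset.sum_le_sum (fun m _ => hcube m)
  _ = (G'.card : ENNReal) * (ENNReal.ofReal δ₁ * ENNReal.ofReal (S^d)) := by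
        rw [Finset.sum_const, nsmul_eq_mul]
  _ = ENNReal.ofReal δ₁ * ((G'.card : ENNReal) * ENNReal.ofReal (S^d)) := by ring
  _ ≤ ENNReal.ofReal δ₁ * volume (C i) := mul_le_mul_right hlow _
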